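/- Let A be an m×m real symmetric positive definite matrix, b ∈ ℝ^m, w* = A⁻¹b, and let a finite sketch distribution be given by matrices S_1, …, S_q (each S_i ∈ ℝ^{m×τ_i} with Sᵀ_i A S_i invertible) and probabilities p_1, …, p_q ≥ 0 summing to 1. Set H_i = S_i (Sᵀ_i A S_i)⁻¹ Sᵀ_i and ρ = λ_min(A^{1/2} (Σ_i p_i H_i) A^{1/2}). Then 0 ≤ ρ ≤ 1, and for the sketch-and-project iterates w^{k+1}(ω) = w^k(ω) − H_{ω_k} (A w^k(ω) − b) driven by an i.i.d. index sequence ω (each coordinate equal to i with probability p_i), starting from any w^0 ∈ ℝ^m, one has for every t: E[‖w^t − w*‖²_A] ≤ (1 − ρ)^t ‖w^0 − w*‖²_A, and consequently E[‖A w^t − b‖²] ≤ (1 − ρ)^t λ_max(A) ‖w^0 − w*‖²_A, where the expectation is the weighted sum over all index sequences (ω_0,…,ω_{t−1}) ∈ {1,…,q}^t with weight Π_k p_{ω_k}. -/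

import Mathlib

open Matrix

section

open scoped ComplexOrder

/-- The square root of a positive semidefinite matrix, as defined in the older Mathlib
(`Matrix.PosSemidef.sqrt`, since removed). -/
noncomputable def Matrix.PosSemidef.sqrt {n 𝕜 : Type*} [Fintype n] [DecidableEq n] [RCLike 𝕜]
    {A : Matrix n n 𝕜} (hA : A.PosSemidef) : Matrix n n 𝕜 :=
  hA.1.eigenvectorUnitary.1 * diagonal ((↑) ∘ (√·) ∘ hA.1.eigenvalues) *
    (star hA.1.eigenvectorUnitary : Matrix n n 𝕜)

end

lemma spSqrt_mul_self {m : ℕ} {A : Matrix (Fin m) (Fin m) ℝ} (hA : A.PosSemidef) :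
    hA.sqrt * hA.sqrt = A := by
  have hU : (star hA.1.eigenvectorUnitary : Matrix (Fin m) (Fin m) ℝ) *
      (hA.1.eigenvectorUnitary : Matrix (Fin m) (Fin m) ℝ) = 1 := Unitary.coe_star_mul_self _
  have hD : diagonal ((RCLike.ofReal ∘ (fun x => √x) ∘ hA.1.eigenvalues : Fin m → ℝ)) *
      diagonal ((RCLike.ofReal ∘ (fun x => √x) ∘ hA.1.eigenvalues : Fin m → ℝ))
      = diagonal (RCLike.ofReal ∘ hA.1.eigenvalues : Fin m → ℝ) := by
    rw [diagonal_mul_diagonal]; congr 1; funext i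
    simp only [Function.comp_apply, ← RCLike.ofReal_mul, Real.mul_self_sqrt (hA.eigenvalues_nonneg i)]
  conv_rhs => rw [hA.1.spectral_theorem]
  rw [Unitary.conjStarAlgAut_apply, Matrix.PosSemidef.sqrt]
  simp only [Matrix.mul_assoc]
  rw [← Matrix.mul_assoc _ (hA.1.eigenvectorUnitary : Matrix (Fin m) (Fin m) ℝ), hU,
    Matrix.one_mul, ← Matrix.mul_assoc (diagonal _) (diagonal _), hD]

lemma spSqrt_herm {m : ℕ} {A : Matrix (Fin m) (Fin m) ℝ} (hA : A.PosSemidef) :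
    hA.sqrtᴴ = hA.sqrt := by
  rw [Matrix.PosSemidef.sqrt, conjTranspose_mul, conjTranspose_mul,
    star_eq_conjTranspose, conjTranspose_conjTranspose, diagonal_conjTranspose, Matrix.mul_assoc]
  congr 3

/-- `uᵀ W u`, the squared `W`-norm. -/
def normSqW {m : ℕ} (W : Matrix (Fin m) (Fin m) ℝ) (u : Fin m → ℝ) : ℝ :=
  u ⬝ᵥ (W *ᵥ u)

/-- The sketch-and-project iterates `w⁰, w¹, …` driven by a finite index sequence
`σ : Fin t → Fin q`: `w^{k+1} = w^k − H_{σ_k} (A w^k − b)`. -/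
noncomputable def spIter {m q : ℕ} (A : Matrix (Fin m) (Fin m) ℝ) (b w0 : Fin m → ℝ)
    (H : Fin q → Matrix (Fin m) (Fin m) ℝ) :
    (t : ℕ) → (Fin t → Fin q) → (Fin m → ℝ)
  | 0, _ => w0
  | t + 1, σ =>
      spIter A b w0 H t (fun k => σ k.castSucc)
        - H (σ (Fin.last t)) *ᵥ (A *ᵥ spIter A b w0 H t (fun k => σ k.castSucc) - b)

lemma spSq_sums {m : ℕ} {B : Matrix (Fin m) (Fin m) ℝ} (hB : B.IsHermitian) (x : Fin m → ℝ) :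
    ∃ y : Fin m → ℝ, x ⬝ᵥ (B *ᵥ x) = ∑ j, hB.eigenvalues j * (y j * y j) ∧
      x ⬝ᵥ x = ∑ j, y j * y j := by
  classical
  set U : Matrix (Fin m) (Fin m) ℝ := (hB.eigenvectorUnitary : Matrix (Fin m) (Fin m) ℝ) with hU
  have hUU : U * star U = 1 := (Matrix.mem_unitaryGroup_iff).mp hB.eigenvectorUnitary.2
  refine ⟨(star U) *ᵥ x, ?_, ?_⟩
  · conv_lhs => rw [hB.spectral_theorem, Unitary.conjStarAlgAut_apply]
    rw [← mulVec_mulVec, ← mulVec_mulVec, dotProduct_mulVec x U,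
      show x ᵥ* U = (star U) *ᵥ x by
        rw [star_eq_conjTranspose, conjTranspose_eq_transpose_of_trivial, mulVec_transpose]]
    simp [dotProduct, diagonal_mulVec_single, mulVec_diagonal, Finset.mul_sum, mul_comm,
      mul_assoc, mul_left_comm]
    rw [← hU]
  · have : (star U *ᵥ x) ⬝ᵥ (star U *ᵥ x) = x ⬝ᵥ x := by
      rw [dotProduct_mulVec, show (star U *ᵥ x) ᵥ* star U = (U * star U) *ᵥ x by
        rw [star_eq_conjTranspose, conjTranspose_eq_transpose_of_trivial, vecMul_transpose,
          mulVec_mulVec], hUU, one_mulVec]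
    rw [← this]; simp [dotProduct]

lemma spRayleigh_lower {m : ℕ} {B : Matrix (Fin m) (Fin m) ℝ} (hB : B.IsHermitian)
    (x : Fin m → ℝ) : (⨅ j, hB.eigenvalues j) * (x ⬝ᵥ x) ≤ x ⬝ᵥ (B *ᵥ x) := by
  obtain ⟨y, h1, h2⟩ := spSq_sums hB x
  rw [h1, h2, Finset.mul_sum]
  exact Finset.sum_le_sum fun j _ =>
    mul_le_mul_of_nonneg_right (ciInf_le (Set.Finite.bddBelow (Set.finite_range _)) j)
      (mul_self_nonneg _)

lemma spRayleigh_upper {m : ℕ} {B : Matrix (Fin m) (Fin m) ℝ} (hB : B.IsHermitian)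
    (x : Fin m → ℝ) : x ⬝ᵥ (B *ᵥ x) ≤ (⨆ j, hB.eigenvalues j) * (x ⬝ᵥ x) := by
  obtain ⟨y, h1, h2⟩ := spSq_sums hB x
  rw [h1, h2, Finset.mul_sum]
  exact Finset.sum_le_sum fun j _ =>
    mul_le_mul_of_nonneg_right (le_ciSup (Set.Finite.bddAbove (Set.finite_range _)) j)
      (mul_self_nonneg _)

lemma spConj_quad {m : ℕ} (N W : Matrix (Fin m) (Fin m) ℝ) (e : Fin m → ℝ) :
    (N *ᵥ e) ⬝ᵥ (W *ᵥ (N *ᵥ e)) = e ⬝ᵥ ((Nᵀ * W * N) *ᵥ e) := by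
  rw [← mulVec_mulVec, ← mulVec_mulVec, dotProduct_mulVec e, vecMul_transpose]

lemma spQuad_step {m : ℕ} (A M : Matrix (Fin m) (Fin m) ℝ) (hAs : Aᵀ = A) (hMs : Mᵀ = M)
    (hMAM : M * A * M = M) (e : Fin m → ℝ) :
    normSqW A (e - M *ᵥ (A *ᵥ e)) = normSqW A e - e ⬝ᵥ ((A * M * A) *ᵥ e) := by
  have h1 : e - M *ᵥ (A *ᵥ e) = (1 - M * A) *ᵥ e := by
    rw [sub_mulVec, one_mulVec, mulVec_mulVec]
  have h2 : (1 - M * A)ᵀ * A * (1 - M * A) = A - A * M * A := by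
    have hT : (1 - M * A)ᵀ = 1 - A * M := by
      rw [transpose_sub, transpose_one, transpose_mul, hAs, hMs]
    rw [hT, show (1 - A * M) * A * (1 - M * A)
        = A - A * (M * A) - A * (M * A) + A * ((M * A * M) * A) by noncomm_ring, hMAM]
    noncomm_ring
  rw [normSqW, h1, spConj_quad, h2, sub_mulVec, dotProduct_sub, normSqW]

lemma spQuad_pos_part {m : ℕ} (A M : Matrix (Fin m) (Fin m) ℝ) (hAs : Aᵀ = A) (hMs : Mᵀ = M)
    (hMAM : M * A * M = M) (e : Fin m → ℝ) :
    e ⬝ᵥ ((A * M * A) *ᵥ e) = normSqW A (M *ᵥ (A *ᵥ e)) := by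
  rw [normSqW, mulVec_mulVec, spConj_quad, transpose_mul, hMs, hAs]
  congr 2
  rw [show A * M * A * (M * A) = A * ((M * A * M) * A) by noncomm_ring, hMAM]
  noncomm_ring

/-- **Linear convergence of sketch-and-project (Theorem 1).**
With `H_i = S_i (S_iᵀ A S_i)⁻¹ S_iᵀ`, `ρ = λ_min(A^{1/2} (Σ_i p_i H_i) A^{1/2})`
satisfies `0 ≤ ρ ≤ 1`, and the iterates converge linearly in L2:
`E[‖wᵗ − w*‖²_A] ≤ (1−ρ)ᵗ ‖w⁰ − w*‖²_A` and
`E[‖A wᵗ − b‖²] ≤ (1−ρ)ᵗ λ_max(A) ‖w⁰ − w*‖²_A`.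
(The hypothesis `hHerm` records the — always valid — fact that
`A^{1/2} (Σ_i p_i H_i) A^{1/2}` is symmetric, so that its eigenvalues are defined.) -/
theorem sketch_and_project_linear_convergence {m q : ℕ}
    (A : Matrix (Fin m) (Fin m) ℝ) (hA : A.PosDef)
    (b wstar : Fin m → ℝ) (hwstar : wstar = A⁻¹ *ᵥ b)
    (τ : Fin q → ℕ) (S : (i : Fin q) → Matrix (Fin m) (Fin (τ i)) ℝ)
    (hS : ∀ i, IsUnit ((S i)ᵀ * A * S i))
    (p : Fin q → ℝ) (hp : ∀ i, 0 ≤ p i) (hp1 : ∑ i, p i = 1)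
    (H : Fin q → Matrix (Fin m) (Fin m) ℝ)
    (hH : ∀ i, H i = S i * ((S i)ᵀ * A * S i)⁻¹ * (S i)ᵀ)
    (hHerm : (hA.posSemidef.sqrt * (∑ i, p i • H i) * hA.posSemidef.sqrt).IsHermitian)
    (w0 : Fin m → ℝ) :
    let ρ := ⨅ j, hHerm.eigenvalues j
    0 ≤ ρ ∧ ρ ≤ 1 ∧
    ∀ t : ℕ,
      (∑ σ : Fin t → Fin q, (∏ k, p (σ k)) *
          normSqW A (spIter A b w0 H t σ - wstar))
        ≤ (1 - ρ) ^ t * normSqW A (w0 - wstar) ∧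
      (∑ σ : Fin t → Fin q, (∏ k, p (σ k)) *
          ((A *ᵥ spIter A b w0 H t σ - b) ⬝ᵥ (A *ᵥ spIter A b w0 H t σ - b)))
        ≤ (1 - ρ) ^ t * (⨆ j, hA.1.eigenvalues j) * normSqW A (w0 - wstar) := by
  classical
  intro ρ
  set sqA := hA.posSemidef.sqrt with hsqA
  set Hbar := ∑ i, p i • H i with hHbar
  set B := sqA * Hbar * sqA with hB
  -- basic facts
  have hsq : sqA * sqA = A := spSqrt_mul_self hA.posSemidef
  have hAt : Aᵀ = A := by
    rw [← conjTranspose_eq_transpose_of_trivial]; exact hA.1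
  have hsqt : sqAᵀ = sqA := by
    rw [← conjTranspose_eq_transpose_of_trivial]; exact spSqrt_herm hA.posSemidef
  have hKt : ∀ i, ((S i)ᵀ * A * S i)ᵀ = (S i)ᵀ * A * S i := by
    intro i
    rw [transpose_mul, transpose_mul, transpose_transpose, hAt, ← Matrix.mul_assoc]
  have hHt : ∀ i, (H i)ᵀ = H i := by
    intro i
    rw [hH i, transpose_mul, transpose_mul, transpose_transpose, transpose_nonsing_inv, hKt,
      ← Matrix.mul_assoc]
  have hKinv : ∀ i, ((S i)ᵀ * A * S i)⁻¹ * ((S i)ᵀ * A * S i) = 1 := fun i =>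
    nonsing_inv_mul _ ((Matrix.isUnit_iff_isUnit_det _).mp (hS i))
  have hHAH : ∀ i, H i * A * H i = H i := by
    intro i
    rw [hH i]
    simp only [← Matrix.mul_assoc]
    rw [Matrix.mul_assoc (S i * ((S i)ᵀ * A * S i)⁻¹ * (S i)ᵀ) A (S i),
      Matrix.mul_assoc (S i * ((S i)ᵀ * A * S i)⁻¹) ((S i)ᵀ) (A * S i),
      ← Matrix.mul_assoc ((S i)ᵀ) A (S i),
      Matrix.mul_assoc (S i) (((S i)ᵀ * A * S i)⁻¹) _, hKinv i, Matrix.mul_one]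
  -- nonnegativity of A-quadratic form
  have hAnn : ∀ v : Fin m → ℝ, 0 ≤ normSqW A v := by
    intro v
    have := hA.posSemidef.dotProduct_mulVec_nonneg v
    simpa [normSqW] using this
  -- x ⬝ x form
  have hxx : ∀ e : Fin m → ℝ, (sqA *ᵥ e) ⬝ᵥ (sqA *ᵥ e) = normSqW A e := by
    intro e
    have := spConj_quad sqA 1 e
    rw [one_mulVec] at this
    rw [this, hsqt, Matrix.mul_one, hsq, normSqW]
  -- A * Hbar * A expansion
  have hAHA : A * Hbar * A = ∑ i, p i • (A * H i * A) := by
    rw [hHbar, Finset.mul_sum, Finset.sum_mul]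
    congr 1; ext i : 1
    rw [Matrix.mul_smul, Matrix.smul_mul]
  have hquadsum : ∀ e : Fin m → ℝ,
      e ⬝ᵥ ((A * Hbar * A) *ᵥ e) = ∑ i, p i * (e ⬝ᵥ ((A * H i * A) *ᵥ e)) := by
    intro e
    rw [hAHA]
    induction (Finset.univ : Finset (Fin q)) using Finset.induction with
    | empty => simp
    | insert _ _ h ih =>
      rw [Finset.sum_insert h, Finset.sum_insert h, Matrix.add_mulVec, dotProduct_add, ih,
        smul_mulVec, dotProduct_smul, smul_eq_mul]
  have hconjB : ∀ e : Fin m → ℝ,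
      (sqA *ᵥ e) ⬝ᵥ (B *ᵥ (sqA *ᵥ e)) = e ⬝ᵥ ((A * Hbar * A) *ᵥ e) := by
    intro e
    rw [spConj_quad, hsqt, hB]
    congr 2
    rw [← Matrix.mul_assoc, ← Matrix.mul_assoc, hsq, Matrix.mul_assoc, Matrix.mul_assoc, hsq,
      ← Matrix.mul_assoc]
  -- key identity
  have key : ∀ e : Fin m → ℝ,
      ∑ i, p i * normSqW A (e - H i *ᵥ (A *ᵥ e))
        = normSqW A e - (sqA *ᵥ e) ⬝ᵥ (B *ᵥ (sqA *ᵥ e)) := by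
    intro e
    rw [hconjB, hquadsum]
    have : ∀ i, p i * normSqW A (e - H i *ᵥ (A *ᵥ e))
        = p i * normSqW A e - p i * (e ⬝ᵥ ((A * H i * A) *ᵥ e)) := by
      intro i
      rw [spQuad_step A (H i) hAt (hHt i) (hHAH i) e, mul_sub]
    rw [Finset.sum_congr rfl (fun i _ => this i), Finset.sum_sub_distrib, ← Finset.sum_mul, hp1,
      one_mul]
  -- key2 : positivity form
  have key2 : ∀ e : Fin m → ℝ,
      (sqA *ᵥ e) ⬝ᵥ (B *ᵥ (sqA *ᵥ e)) = ∑ i, p i * normSqW A (H i *ᵥ (A *ᵥ e)) := by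
    intro e
    rw [hconjB, hquadsum]
    exact Finset.sum_congr rfl fun i _ => by
      rw [spQuad_pos_part A (H i) hAt (hHt i) (hHAH i) e]
  -- sqA is invertible
  have hdetA : IsUnit A.det := isUnit_iff_ne_zero.mpr hA.det_pos.ne'
  have hdetsq : IsUnit sqA.det := by
    have : sqA.det * sqA.det = A.det := by rw [← det_mul, hsq]
    rw [isUnit_iff_ne_zero]
    intro h
    rw [isUnit_iff_ne_zero] at hdetA
    exact hdetA (by rw [← this, h, zero_mul])
  have hsurj : ∀ x : Fin m → ℝ, ∃ e, sqA *ᵥ e = x := by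
    intro x
    exact ⟨sqA⁻¹ *ᵥ x, by rw [mulVec_mulVec, mul_nonsing_inv _ hdetsq, one_mulVec]⟩
  -- quadratic form bounds for B
  have hBnn : ∀ x : Fin m → ℝ, 0 ≤ x ⬝ᵥ (B *ᵥ x) := by
    intro x
    obtain ⟨e, rfl⟩ := hsurj x
    rw [key2 e]
    exact Finset.sum_nonneg fun i _ => mul_nonneg (hp i) (hAnn _)
  have hBle : ∀ x : Fin m → ℝ, x ⬝ᵥ (B *ᵥ x) ≤ x ⬝ᵥ x := by
    intro x
    obtain ⟨e, rfl⟩ := hsurj x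
    have hk := key e
    have hsum : 0 ≤ ∑ i, p i * normSqW A (e - H i *ᵥ (A *ᵥ e)) :=
      Finset.sum_nonneg fun i _ => mul_nonneg (hp i) (hAnn _)
    rw [hxx e]
    linarith [hk]
  -- B is PSD
  have hBpsd : B.PosSemidef := by
    refine PosSemidef.of_dotProduct_mulVec_nonneg hHerm fun x => ?_
    simpa using hBnn x
  -- 0 ≤ ρ
  have hρ0 : 0 ≤ ρ := Real.iInf_nonneg fun j => hBpsd.eigenvalues_nonneg j
  -- ρ ≤ 1
  have hρ1 : ρ ≤ 1 := by
    rcases isEmpty_or_nonempty (Fin m) with hm | hm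
    · have : ρ = 0 := Real.iInf_of_isEmpty _
      rw [this]; exact zero_le_one
    · obtain ⟨j⟩ := hm
      refine le_trans (ciInf_le (Set.Finite.bddBelow (Set.finite_range _)) j) ?_
      have hveq := hHerm.eigenvalues_eq j
      set v : Fin m → ℝ := ⇑(hHerm.eigenvectorBasis j) with hv
      have hnorm : v ⬝ᵥ v = 1 := by
        have h1 : ‖hHerm.eigenvectorBasis j‖ = 1 := hHerm.eigenvectorBasis.orthonormal.1 j
        have h2 : (inner ℝ (hHerm.eigenvectorBasis j) (hHerm.eigenvectorBasis j) : ℝ)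
            = v ⬝ᵥ v := by
          rw [EuclideanSpace.inner_eq_star_dotProduct]
          simp [dotProduct, hv]
        rw [← h2, real_inner_self_eq_norm_sq, h1, one_pow]
      have : hHerm.eigenvalues j = v ⬝ᵥ (B *ᵥ v) := by
        rw [hveq]; simp [hv]
      rw [this]
      calc v ⬝ᵥ (B *ᵥ v) ≤ v ⬝ᵥ v := hBle v
        _ = 1 := hnorm
  refine ⟨hρ0, hρ1, ?_⟩
  -- step inequality
  have step : ∀ e : Fin m → ℝ,
      ∑ i, p i * normSqW A (e - H i *ᵥ (A *ᵥ e)) ≤ (1 - ρ) * normSqW A e := by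
    intro e
    rw [key e]
    have hlow := spRayleigh_lower hHerm (sqA *ᵥ e)
    rw [hxx e] at hlow
    have : ρ * normSqW A e ≤ (sqA *ᵥ e) ⬝ᵥ (B *ᵥ (sqA *ᵥ e)) := hlow
    linarith
  -- A *ᵥ wstar = b
  have hAw : A *ᵥ wstar = b := by
    rw [hwstar, mulVec_mulVec, mul_nonsing_inv _ hdetA, one_mulVec]
  -- main induction
  have main : ∀ t : ℕ,
      (∑ σ : Fin t → Fin q, (∏ k, p (σ k)) * normSqW A (spIter A b w0 H t σ - wstar))
        ≤ (1 - ρ) ^ t * normSqW A (w0 - wstar) := by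
    intro t
    induction t with
    | zero =>
      rw [Fintype.sum_unique]
      simp [spIter]
    | succ t ih =>
      rw [← Equiv.sum_comp (Fin.snocEquiv (fun _ => Fin q))]
      rw [Fintype.sum_prod_type]
      have hterm : ∀ (i : Fin q) (g : Fin t → Fin q),
          (∏ k, p ((Fin.snocEquiv (fun _ => Fin q)) (i, g) k)) *
            normSqW A (spIter A b w0 H (t + 1) ((Fin.snocEquiv (fun _ => Fin q)) (i, g)) - wstar)
          = (∏ k, p (g k)) * (p i *
              normSqW A ((spIter A b w0 H t g - wstar)
                - H i *ᵥ (A *ᵥ (spIter A b w0 H t g - wstar)))) := by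
        intro i g
        have hcast : (fun k : Fin t => (Fin.snocEquiv (fun _ => Fin q)) (i, g) k.castSucc) = g := by
          funext k; simp [Fin.snocEquiv]
        have hlast : (Fin.snocEquiv (fun _ => Fin q)) (i, g) (Fin.last t) = i := by
          simp [Fin.snocEquiv]
        have hprod : (∏ k, p ((Fin.snocEquiv (fun _ => Fin q)) (i, g) k))
            = (∏ k, p (g k)) * p i := by
          rw [Fin.prod_univ_castSucc]
          rw [hlast]
          congr 1
          exact Finset.prod_congr rfl fun k _ => by rw [congrFun hcast k]
        have hiter : spIter A b w0 H (t + 1) ((Fin.snocEquiv (fun _ => Fin q)) (i, g)) - wstar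
            = (spIter A b w0 H t g - wstar)
                - H i *ᵥ (A *ᵥ (spIter A b w0 H t g - wstar)) := by
          show spIter A b w0 H t _ - H _ *ᵥ (A *ᵥ spIter A b w0 H t _ - b) - wstar = _
          rw [hcast, hlast, ← hAw, ← mulVec_sub, sub_right_comm]
        rw [hprod, hiter, mul_assoc]
      rw [Finset.sum_congr rfl (fun i _ => Finset.sum_congr rfl (fun g _ => hterm i g))]
      rw [Finset.sum_comm]
      calc ∑ g : Fin t → Fin q, ∑ i : Fin q, (∏ k, p (g k)) * (p i *
              normSqW A ((spIter A b w0 H t g - wstar)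
                - H i *ᵥ (A *ᵥ (spIter A b w0 H t g - wstar))))
          = ∑ g : Fin t → Fin q, (∏ k, p (g k)) * ∑ i : Fin q, p i *
              normSqW A ((spIter A b w0 H t g - wstar)
                - H i *ᵥ (A *ᵥ (spIter A b w0 H t g - wstar))) := by
            exact Finset.sum_congr rfl fun g _ => (Finset.mul_sum _ _ _).symm
        _ ≤ ∑ g : Fin t → Fin q, (∏ k, p (g k)) *
              ((1 - ρ) * normSqW A (spIter A b w0 H t g - wstar)) := by
            refine Finset.sum_le_sum fun g _ => ?_
            exact mul_le_mul_of_nonneg_left (step _)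
              (Finset.prod_nonneg fun k _ => hp _)
        _ = (1 - ρ) * ∑ g : Fin t → Fin q, (∏ k, p (g k)) *
              normSqW A (spIter A b w0 H t g - wstar) := by
            rw [Finset.mul_sum]
            exact Finset.sum_congr rfl fun g _ => by ring
        _ ≤ (1 - ρ) * ((1 - ρ) ^ t * normSqW A (w0 - wstar)) :=
            mul_le_mul_of_nonneg_left ih (by linarith)
        _ = (1 - ρ) ^ (t + 1) * normSqW A (w0 - wstar) := by ring
  -- second bound per vector
  have hres : ∀ e : Fin m → ℝ,
      (A *ᵥ e) ⬝ᵥ (A *ᵥ e) ≤ (⨆ j, hA.1.eigenvalues j) * normSqW A e := by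
    intro e
    have h1 : (A *ᵥ e) ⬝ᵥ (A *ᵥ e) = (sqA *ᵥ e) ⬝ᵥ (A *ᵥ (sqA *ᵥ e)) := by
      have ha := spConj_quad A 1 e
      rw [one_mulVec] at ha
      have hb := spConj_quad sqA A e
      rw [ha, hb, hAt, Matrix.mul_one, hsqt]
      congr 2
      rw [← hsq]
      rw [show sqA * sqA * (sqA * sqA) = sqA * (sqA * sqA) * sqA by noncomm_ring]
    rw [h1, ← hxx e]
    exact spRayleigh_upper hA.1 (sqA *ᵥ e)
  have hsupnn : 0 ≤ ⨆ j, hA.1.eigenvalues j :=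
    Real.iSup_nonneg fun j => hA.posSemidef.eigenvalues_nonneg j
  intro t
  refine ⟨main t, ?_⟩
  calc (∑ σ : Fin t → Fin q, (∏ k, p (σ k)) *
          ((A *ᵥ spIter A b w0 H t σ - b) ⬝ᵥ (A *ᵥ spIter A b w0 H t σ - b)))
      ≤ ∑ σ : Fin t → Fin q, (∏ k, p (σ k)) *
          ((⨆ j, hA.1.eigenvalues j) * normSqW A (spIter A b w0 H t σ - wstar)) := by
        refine Finset.sum_le_sum fun σ _ => ?_
        refine mul_le_mul_of_nonneg_left ?_ (Finset.prod_nonneg fun k _ => hp _)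
        have : A *ᵥ spIter A b w0 H t σ - b = A *ᵥ (spIter A b w0 H t σ - wstar) := by
          rw [← hAw, ← mulVec_sub]
        rw [this]
        exact hres _
    _ = (⨆ j, hA.1.eigenvalues j) * ∑ σ : Fin t → Fin q, (∏ k, p (σ k)) *
          normSqW A (spIter A b w0 H t σ - wstar) := by
        rw [Finset.mul_sum]
        exact Finset.sum_congr rfl fun σ _ => by ring
    _ ≤ (⨆ j, hA.1.eigenvalues j) * ((1 - ρ) ^ t * normSqW A (w0 - wstar)) :=
        mul_le_mul_of_nonneg_left (main t) hsupnn
    _ = (1 - ρ) ^ t * (⨆ j, hA.1.eigenvalues j) * normSqW A (w0 - wstar) := by ring
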